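/- Let q ∈ ℝ and let u ∈ C¹(ℝ) be q-symmetric in the sense that u(-x) = (B_q u)(x) for all x, where B_q u = u - i P₁₂ and P solves P_x = (Q - i[σ,P])P - PQ, P(0) = -iqσ₃, Q = [[0,u],[-conj(u),0]]. Then u satisfies the Robin boundary condition u'(0) + q u(0) = 0. -/

import Mathlib

open Matrix Complex

attribute [local instance] Matrix.normedAddCommGroup Matrix.normedSpace

noncomputable def sigma3 : Matrix (Fin 2) (Fin 2) ℂ := !![1, 0; 0, -1]

noncomputable def sigmaM : Matrix (Fin 2) (Fin 2) ℂ := (1/2 : ℂ) • sigma3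

noncomputable def Qmat (u : ℝ → ℂ) (x : ℝ) : Matrix (Fin 2) (Fin 2) ℂ :=
  !![0, u x; -(starRingEnd ℂ) (u x), 0]

/-- If `u ∈ C¹(ℝ)` is `q`-symmetric, i.e. `u(-x) = (B_q u)(x) = u(x) - i P₁₂(x)`
where `P` solves `P_x = (Q - i[σ,P])P - PQ`, `P(0) = -iqσ₃`, then `u` satisfies
the Robin boundary condition `u'(0) + q u(0) = 0`. -/
theorem robin_bc_of_q_symmetric (q : ℝ) (u u' : ℝ → ℂ)
    (hu : ∀ x : ℝ, HasDerivAt u (u' x) x)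
    (P P' : ℝ → Matrix (Fin 2) (Fin 2) ℂ)
    (hP : ∀ x : ℝ, HasDerivAt P (P' x) x)
    (hODE : ∀ x : ℝ,
      P' x = (Qmat u x - Complex.I • (sigmaM * P x - P x * sigmaM)) * P x
        - P x * Qmat u x)
    (hP0 : P 0 = (-(Complex.I * (q : ℂ))) • sigma3)
    (hsym : ∀ x : ℝ, u (-x) = u x - Complex.I * P x 0 1) :
    u' 0 + (q : ℂ) * u 0 = 0 := by
  -- entry map as continuous linear map
  let L : Matrix (Fin 2) (Fin 2) ℂ →ₗ[ℂ] ℂ :=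
    { toFun := fun M => M 0 1
      map_add' := fun _ _ => rfl
      map_smul' := fun _ _ => rfl }
  have hL : HasDerivAt (fun x => P x 0 1) (P' 0 0 1) 0 := by
    have h := ((LinearMap.toContinuousLinearMap L).restrictScalars ℝ).hasFDerivAt.comp_hasDerivAt 0 (hP 0)
    exact h
  -- derivative of LHS of symmetry at 0
  have h1 : HasDerivAt (fun x : ℝ => u (-x)) (-(u' 0)) 0 := by
    have h0 : HasDerivAt u (u' 0) (-(0:ℝ)) := by simpa using hu 0
    have := h0.scomp (x := (0:ℝ)) (hasDerivAt_neg (0:ℝ))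
    simpa [Function.comp_def] using this
  -- derivative of RHS at 0
  have h2 : HasDerivAt (fun x : ℝ => u x - Complex.I * P x 0 1)
      (u' 0 - Complex.I * P' 0 0 1) 0 := (hu 0).sub (hL.const_mul Complex.I)
  have heq : -(u' 0) = u' 0 - Complex.I * P' 0 0 1 := by
    have : (fun x : ℝ => u (-x)) = fun x => u x - Complex.I * P x 0 1 :=
      funext hsym
    exact (this ▸ h1).unique h2
  -- compute P'(0)₀₁
  have hentry : P' 0 0 1 = 2 * Complex.I * q * u 0 := by
    have h := hODE 0
    have : P' 0 0 1 = ((Qmat u 0 - Complex.I • (sigmaM * P 0 - P 0 * sigmaM)) * P 0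
        - P 0 * Qmat u 0) 0 1 := by rw [h]
    rw [this, hP0]
    simp [Matrix.mul_apply, Fin.sum_univ_two, sigma3, sigmaM, Qmat]
    ring
  rw [hentry] at heq
  linear_combination (-(1:ℂ)/2) * heq + (q : ℂ) * u 0 * Complex.I_sq
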